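/- Let α ∈ (0,1) and τ ∈ (-1,0). Then the function t ↦ t^{-1-2α}·(χ_{(0,1)}(t)(1-t)^τ + (1+t)^τ - 2) is Lebesgue integrable on (0,+∞); in particular the integral defining C(τ) converges absolutely. -/

import Mathlib

open MeasureTheory Set

/-- Second derivative bound gives `|(1-t)^τ + (1+t)^τ - 2| ≤ 9 t²` on `[0, 1/2]`. -/
lemma aux_quadratic_bound (τ : ℝ) (hτ : τ ∈ Ioo (-1:ℝ) 0) :
    ∀ t ∈ Icc (0:ℝ) (1/2), |(1 - t) ^ τ + (1 + t) ^ τ - 2| ≤ 9 * t ^ 2 := by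
  obtain ⟨hτ1, hτ0⟩ := hτ
  set g : ℝ → ℝ := fun t => (1 - t) ^ τ + (1 + t) ^ τ - 2 with hg_def
  set G : ℝ → ℝ := fun t => τ * (1 + t) ^ (τ - 1) - τ * (1 - t) ^ (τ - 1) with hG_def
  set G2 : ℝ → ℝ := fun t => τ * (τ - 1) * ((1 + t) ^ (τ - 2) + (1 - t) ^ (τ - 2))
    with hG2_def
  have hg' : ∀ t ∈ Icc (0:ℝ) (1/2), HasDerivAt g (G t) t := by
    intro t ht
    have h1 : (1 - t : ℝ) ≠ 0 := by
      have := ht.2; intro h; nlinarith [ht.1]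
    have h2 : (1 + t : ℝ) ≠ 0 := by
      have := ht.1; intro h; linarith
    have d1 : HasDerivAt (fun t : ℝ => (1 - t) ^ τ) ((-1) * τ * (1 - t) ^ (τ - 1)) t := by
      have : HasDerivAt (fun t : ℝ => 1 - t) (-1) t := by
        simpa using (hasDerivAt_id t).const_sub 1
      exact this.rpow_const (Or.inl h1)
    have d2 : HasDerivAt (fun t : ℝ => (1 + t) ^ τ) (1 * τ * (1 + t) ^ (τ - 1)) t := by
      have : HasDerivAt (fun t : ℝ => 1 + t) 1 t := by
        simpa using (hasDerivAt_id t).const_add 1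
      exact this.rpow_const (Or.inl h2)
    have := (d1.add d2).sub_const 2
    refine this.congr_deriv ?_
    simp [hG_def]; ring
  have hG' : ∀ t ∈ Icc (0:ℝ) (1/2), HasDerivAt G (G2 t) t := by
    intro t ht
    have h1 : (1 - t : ℝ) ≠ 0 := by
      have := ht.2; intro h; nlinarith [ht.1]
    have h2 : (1 + t : ℝ) ≠ 0 := by
      have := ht.1; intro h; linarith
    have d1 : HasDerivAt (fun t : ℝ => (1 - t) ^ (τ - 1)) ((-1) * (τ - 1) * (1 - t) ^ (τ - 1 - 1)) t := by
      have : HasDerivAt (fun t : ℝ => 1 - t) (-1) t := by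
        simpa using (hasDerivAt_id t).const_sub 1
      exact this.rpow_const (Or.inl h1)
    have d2 : HasDerivAt (fun t : ℝ => (1 + t) ^ (τ - 1)) (1 * (τ - 1) * (1 + t) ^ (τ - 1 - 1)) t := by
      have : HasDerivAt (fun t : ℝ => 1 + t) 1 t := by
        simpa using (hasDerivAt_id t).const_add 1
      exact this.rpow_const (Or.inl h2)
    have := (d2.const_mul τ).sub (d1.const_mul τ)
    refine this.congr_deriv ?_
    have e : τ - 1 - 1 = τ - 2 := by ring
    simp [hG2_def, e]; ring
  have hG2bound : ∀ t ∈ Icc (0:ℝ) (1/2), ‖G2 t‖ ≤ 18 := by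
    intro t ht
    have h1pos : (0:ℝ) < 1 - t := by have := ht.2; linarith
    have h2pos : (0:ℝ) < 1 + t := by have := ht.1; linarith
    have b1 : (1 + t) ^ (τ - 2) ≤ 1 :=
      Real.rpow_le_one_of_one_le_of_nonpos (by linarith [ht.1]) (by linarith)
    have b2 : (1 - t) ^ (τ - 2) ≤ 8 := by
      have step1 : (1 - t) ^ (τ - 2) ≤ ((1:ℝ)/2) ^ (τ - 2) :=
        Real.rpow_le_rpow_of_nonpos (by norm_num) (by linarith [ht.2]) (by linarith)
      have step2 : ((1:ℝ)/2) ^ (τ - 2) = (2:ℝ) ^ (2 - τ) := by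
        have e1 : ((1:ℝ)/2) ^ (τ - 2) = ((2:ℝ) ^ (τ - 2))⁻¹ := by
          rw [one_div, Real.inv_rpow (by norm_num)]
        have e2 : (2:ℝ) ^ (2 - τ) = ((2:ℝ) ^ (τ - 2))⁻¹ := by
          rw [show (2 - τ) = -(τ - 2) by ring, Real.rpow_neg (by norm_num)]
        rw [e1, e2]
      have step3 : (2:ℝ) ^ (2 - τ) ≤ (2:ℝ) ^ (3:ℝ) :=
        Real.rpow_le_rpow_of_exponent_le (by norm_num) (by linarith)
      have step4 : (2:ℝ) ^ (3:ℝ) = 8 := by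
        rw [show (3:ℝ) = ((3:ℕ):ℝ) by norm_num, Real.rpow_natCast]; norm_num
      linarith
    have hnn1 : (0:ℝ) ≤ (1 + t) ^ (τ - 2) := Real.rpow_nonneg h2pos.le _
    have hnn2 : (0:ℝ) ≤ (1 - t) ^ (τ - 2) := Real.rpow_nonneg h1pos.le _
    have habs : |τ * (τ - 1)| ≤ 2 := by
      rw [abs_mul]
      have : |τ| ≤ 1 := by rw [abs_le]; constructor <;> linarith
      have : |τ - 1| ≤ 2 := by rw [abs_le]; constructor <;> linarith
      nlinarith [abs_nonneg τ, abs_nonneg (τ - 1), abs_le.mp (show |τ| ≤ 1 by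
        rw [abs_le]; constructor <;> linarith)]
    have : ‖G2 t‖ = |τ * (τ - 1)| * |(1 + t) ^ (τ - 2) + (1 - t) ^ (τ - 2)| := by
      simp [hG2_def, abs_mul]
    rw [this]
    have hsum : |(1 + t) ^ (τ - 2) + (1 - t) ^ (τ - 2)| ≤ 9 := by
      rw [abs_of_nonneg (by linarith)]; linarith
    calc |τ * (τ - 1)| * |(1 + t) ^ (τ - 2) + (1 - t) ^ (τ - 2)|
        ≤ 2 * 9 := mul_le_mul habs hsum (abs_nonneg _) (by norm_num)
      _ = 18 := by norm_num
  have hG0 : G 0 = 0 := by simp [hG_def]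
  have hGbound : ∀ t ∈ Icc (0:ℝ) (1/2), |G t| ≤ 18 * t := by
    intro t ht
    have := (convex_Icc (0:ℝ) (1/2)).norm_image_sub_le_of_norm_hasDerivWithin_le
      (f := G) (f' := G2) (fun x hx => (hG' x hx).hasDerivWithinAt) hG2bound
      (left_mem_Icc.mpr (by norm_num)) ht
    rw [hG0, sub_zero] at this
    simpa [Real.norm_eq_abs, abs_of_nonneg ht.1] using this
  intro t ht
  rcases eq_or_lt_of_le ht.1 with h0 | h0
  · subst h0; norm_num [hg_def]
  have hcont : ContinuousOn G (uIcc 0 t) := by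
    rw [uIcc_of_le ht.1]
    have c1 : ContinuousOn (fun x : ℝ => (1 + x) ^ (τ - 1)) (Icc 0 t) := by
      apply ContinuousOn.rpow_const
      · exact continuousOn_const.add continuousOn_id
      · intro x hx; left; have := hx.1; intro h; linarith
    have c2 : ContinuousOn (fun x : ℝ => (1 - x) ^ (τ - 1)) (Icc 0 t) := by
      apply ContinuousOn.rpow_const
      · exact continuousOn_const.sub continuousOn_id
      · intro x hx; left
        have hx2 : x ≤ 1/2 := le_trans hx.2 ht.2
        intro h; nlinarith [hx.1]
    exact (continuousOn_const.mul c1).sub (continuousOn_const.mul c2)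
  have hItt : Set.uIoc (0:ℝ) t = Ioc 0 t := uIoc_of_le ht.1
  have hFTC : ∫ u in (0:ℝ)..t, G u = g t - g 0 :=
    intervalIntegral.integral_eq_sub_of_hasDerivAt
      (fun x hx => hg' x (by rw [uIcc_of_le ht.1] at hx; exact ⟨hx.1, le_trans hx.2 ht.2⟩))
      (hcont.intervalIntegrable)
  have hg0 : g 0 = 0 := by norm_num [hg_def]
  have hae : ∀ᵐ u ∂(volume.restrict (Set.uIoc (0:ℝ) t)), ‖G u‖ ≤ 18 * u := by
    rw [hItt, ae_restrict_iff' measurableSet_Ioc]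
    refine ae_of_all _ fun u hu => ?_
    have : u ∈ Icc (0:ℝ) (1/2) := ⟨hu.1.le, le_trans hu.2 ht.2⟩
    simpa [Real.norm_eq_abs] using hGbound u this
  have hbint : IntervalIntegrable (fun u : ℝ => 18 * u) volume 0 t :=
    (continuous_const.mul continuous_id).intervalIntegrable 0 t
  have hval : (∫ u in (0:ℝ)..t, 18 * u) = 9 * t ^ 2 := by
    rw [intervalIntegral.integral_const_mul, integral_id]
    ring
  have := intervalIntegral.norm_integral_le_abs_of_norm_le hae hbint
  rw [hFTC, hg0, sub_zero, hval] at this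
  have h9 : |9 * t ^ 2| = 9 * t ^ 2 := abs_of_nonneg (by positivity)
  rw [h9] at this
  simpa [Real.norm_eq_abs, hg_def] using this

theorem stmt_0 (α τ : ℝ) (hα : α ∈ Ioo (0:ℝ) 1) (hτ : τ ∈ Ioo (-1:ℝ) 0) :
    IntegrableOn
      (fun t : ℝ => t ^ (-1 - 2*α) *
        ((Ioo (0:ℝ) 1).indicator (fun s => (1 - s) ^ τ) t + (1 + t) ^ τ - 2))
      (Ioi (0:ℝ)) := by
  obtain ⟨hα0, hα1⟩ := hα
  obtain ⟨hτ1, hτ0⟩ := hτ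
  set f : ℝ → ℝ := fun t : ℝ => t ^ (-1 - 2*α) *
      ((Ioo (0:ℝ) 1).indicator (fun s => (1 - s) ^ τ) t + (1 + t) ^ τ - 2) with hf_def
  have hmeas : Measurable f := by
    apply Measurable.mul
    · fun_prop
    · apply Measurable.sub
      · apply Measurable.add
        · exact (Measurable.indicator (by fun_prop) measurableSet_Ioo)
        · fun_prop
      · fun_prop
  -- piece 1 : Ioc 0 (1/2)
  have piece1 : IntegrableOn f (Ioc 0 (1/2)) := by
    have hdom : IntegrableOn (fun t : ℝ => 9 * t ^ (1 - 2*α)) (Ioc 0 (1/2)) := by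
      have := (intervalIntegral.intervalIntegrable_rpow' (a := 0) (b := 1/2)
        (r := 1 - 2*α) (by linarith))
      exact ((intervalIntegrable_iff_integrableOn_Ioc_of_le (by norm_num)).mp this).const_mul 9
    refine Integrable.mono' hdom (hmeas.aestronglyMeasurable.restrict) ?_
    rw [ae_restrict_iff' measurableSet_Ioc]
    refine ae_of_all _ fun t ht => ?_
    have ht0 : (0:ℝ) < t := ht.1
    have htm : t ∈ Ioo (0:ℝ) 1 := ⟨ht.1, lt_of_le_of_lt ht.2 (by norm_num)⟩
    have hq := aux_quadratic_bound τ ⟨hτ1, hτ0⟩ t ⟨ht.1.le, ht.2⟩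
    have hind : (Ioo (0:ℝ) 1).indicator (fun s => (1 - s) ^ τ) t = (1 - t) ^ τ :=
      indicator_of_mem htm _
    have hrw : ‖f t‖ = t ^ (-1 - 2*α) * |(1 - t) ^ τ + (1 + t) ^ τ - 2| := by
      rw [hf_def]; simp only [hind, Real.norm_eq_abs, abs_mul,
        abs_of_nonneg (Real.rpow_nonneg ht0.le (-1 - 2*α))]
    rw [hrw]
    calc t ^ (-1 - 2*α) * |(1 - t) ^ τ + (1 + t) ^ τ - 2|
        ≤ t ^ (-1 - 2*α) * (9 * t ^ 2) :=
          mul_le_mul_of_nonneg_left hq (Real.rpow_nonneg ht0.le _)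
      _ = 9 * t ^ (1 - 2*α) := by
          rw [show (t:ℝ) ^ (2:ℕ) = t ^ ((2:ℕ):ℝ) from (Real.rpow_natCast t 2).symm,
            show ((2:ℕ):ℝ) = (2:ℝ) by norm_num]
          rw [mul_comm (t ^ (-1 - 2*α)), mul_assoc, ← Real.rpow_add ht0]
          ring_nf
  -- piece 2 : Ioc (1/2) 1
  have piece2 : IntegrableOn f (Ioc (1/2) 1) := by
    have hdom : IntegrableOn (fun t : ℝ => 8 * (1 - t) ^ τ + 16) (Ioc (1/2) 1) := by
      have h1 : IntervalIntegrable (fun x : ℝ => x ^ τ) volume 0 (1/2) :=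
        intervalIntegral.intervalIntegrable_rpow' hτ1
      have h2 := (h1.comp_sub_left 1).symm
      norm_num at h2
      have h3 : IntegrableOn (fun x : ℝ => (1 - x) ^ τ) (Ioc (1/2) 1) :=
        (intervalIntegrable_iff_integrableOn_Ioc_of_le (by norm_num)).mp h2
      exact (h3.const_mul 8).add ((integrableOn_const_iff (C := (16:ℝ))).mpr (Or.inr measure_Ioc_lt_top))
    refine Integrable.mono' hdom (hmeas.aestronglyMeasurable.restrict) ?_
    rw [ae_restrict_iff' measurableSet_Ioc]
    refine ae_of_all _ fun t ht => ?_
    have ht0 : (0:ℝ) < t := lt_trans (by norm_num) ht.1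
    have hrp : t ^ (-1 - 2*α) ≤ 8 := by
      have s1 : t ^ (-1 - 2*α) ≤ ((1:ℝ)/2) ^ (-1 - 2*α) :=
        Real.rpow_le_rpow_of_nonpos (by norm_num) ht.1.le (by linarith)
      have s2 : ((1:ℝ)/2) ^ (-1 - 2*α) = (2:ℝ) ^ (1 + 2*α) := by
        have e1 : ((1:ℝ)/2) ^ (-1 - 2*α) = ((2:ℝ) ^ (-1 - 2*α))⁻¹ := by
          rw [one_div, Real.inv_rpow (by norm_num)]
        have e2 : (2:ℝ) ^ (1 + 2*α) = ((2:ℝ) ^ (-1 - 2*α))⁻¹ := by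
          rw [show (1 + 2*α) = -(-1 - 2*α) by ring, Real.rpow_neg (by norm_num)]
        rw [e1, e2]
      have s3 : (2:ℝ) ^ (1 + 2*α) ≤ (2:ℝ) ^ (3:ℝ) :=
        Real.rpow_le_rpow_of_exponent_le (by norm_num) (by linarith)
      have s4 : (2:ℝ) ^ (3:ℝ) = 8 := by
        rw [show (3:ℝ) = ((3:ℕ):ℝ) by norm_num, Real.rpow_natCast]; norm_num
      linarith
    have hBpos : (0:ℝ) < (1 + t) ^ τ := Real.rpow_pos_of_pos (by linarith) τ
    have hBle : (1 + t) ^ τ ≤ 1 :=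
      Real.rpow_le_one_of_one_le_of_nonpos (by linarith) hτ0.le
    have hindle : (Ioo (0:ℝ) 1).indicator (fun s => (1 - s) ^ τ) t ≤ (1 - t) ^ τ ∧
        0 ≤ (Ioo (0:ℝ) 1).indicator (fun s => (1 - s) ^ τ) t := by
      by_cases hmem : t ∈ Ioo (0:ℝ) 1
      · rw [indicator_of_mem hmem]
        exact ⟨le_refl _, Real.rpow_nonneg (by linarith [hmem.2]) τ⟩
      · rw [indicator_of_notMem hmem]
        exact ⟨Real.rpow_nonneg (by linarith [ht.2]) τ, le_refl _⟩
    have habs : |(Ioo (0:ℝ) 1).indicator (fun s => (1 - s) ^ τ) t + (1 + t) ^ τ - 2|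
        ≤ (1 - t) ^ τ + 2 := by
      rw [abs_le]
      constructor
      · nlinarith [hindle.1, hindle.2, Real.rpow_nonneg (show (0:ℝ) ≤ 1 - t by linarith [ht.2]) τ]
      · nlinarith [hindle.1, hindle.2]
    have hrw : ‖f t‖ = t ^ (-1 - 2*α) *
        |(Ioo (0:ℝ) 1).indicator (fun s => (1 - s) ^ τ) t + (1 + t) ^ τ - 2| := by
      rw [hf_def]; simp only [Real.norm_eq_abs, abs_mul,
        abs_of_nonneg (Real.rpow_nonneg ht0.le (-1 - 2*α))]
    rw [hrw]
    calc t ^ (-1 - 2*α) * |(Ioo (0:ℝ) 1).indicator (fun s => (1 - s) ^ τ) t + (1 + t) ^ τ - 2|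
        ≤ 8 * ((1 - t) ^ τ + 2) := by
          apply mul_le_mul hrp habs (abs_nonneg _) (by norm_num)
      _ = 8 * (1 - t) ^ τ + 16 := by ring
  -- piece 3 : Ioi 1
  have piece3 : IntegrableOn f (Ioi 1) := by
    have hdom : IntegrableOn (fun t : ℝ => 2 * t ^ (-1 - 2*α)) (Ioi (1:ℝ)) :=
      (integrableOn_Ioi_rpow_of_lt (by linarith) one_pos).const_mul 2
    refine Integrable.mono' hdom (hmeas.aestronglyMeasurable.restrict) ?_
    rw [ae_restrict_iff' measurableSet_Ioi]
    refine ae_of_all _ fun t ht => ?_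
    have ht1 : (1:ℝ) < t := ht
    have ht0 : (0:ℝ) < t := by linarith
    have hnm : t ∉ Ioo (0:ℝ) 1 := fun h => absurd h.2 (not_lt.mpr ht1.le)
    have hBpos : (0:ℝ) < (1 + t) ^ τ := Real.rpow_pos_of_pos (by linarith) τ
    have hBle : (1 + t) ^ τ ≤ 1 :=
      Real.rpow_le_one_of_one_le_of_nonpos (by linarith) hτ0.le
    have hrw : ‖f t‖ = t ^ (-1 - 2*α) * |(1 + t) ^ τ - 2| := by
      rw [hf_def]; simp only [indicator_of_notMem hnm, zero_add, Real.norm_eq_abs, abs_mul,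
        abs_of_nonneg (Real.rpow_nonneg ht0.le (-1 - 2*α))]
    rw [hrw]
    have : |(1 + t) ^ τ - 2| ≤ 2 := by rw [abs_le]; constructor <;> linarith
    calc t ^ (-1 - 2*α) * |(1 + t) ^ τ - 2|
        ≤ t ^ (-1 - 2*α) * 2 :=
          mul_le_mul_of_nonneg_left this (Real.rpow_nonneg ht0.le _)
      _ = 2 * t ^ (-1 - 2*α) := by ring
  have hset : Ioi (0:ℝ) = Ioc 0 (1/2) ∪ (Ioc (1/2) 1 ∪ Ioi 1) := by
    rw [Ioc_union_Ioi_eq_Ioi (by norm_num : (1:ℝ)/2 ≤ 1),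
      Ioc_union_Ioi_eq_Ioi (by norm_num : (0:ℝ) ≤ 1/2)]
  rw [hset]
  exact piece1.union (piece2.union piece3)
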